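/- There exist infinitely many rational numbers c such that the map f_c(z) = z^2 + c has exactly 4 rational preperiodic points, of which exactly 2 are periodic, and these two periodic points form a cycle of exact length 2 (i.e., f_c interchanges two distinct rational points). (This data characterizes the directed graph 4(2).) -/
import Mathlib


/-- The quadratic map `f_c(z) = z² + c`. -/
def fc (c : ℚ) : ℚ → ℚ := fun z => z ^ 2 + c

/-- `x` is preperiodic for `f_c`: its forward orbit is eventually periodic. -/
def IsPreper (c x : ℚ) : Prop := ∃ m n : ℕ, m < n ∧ (fc c)^[m] x = (fc c)^[n] x

/-- `x` is periodic for `f_c`. -/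
def IsPer (c x : ℚ) : Prop := ∃ n : ℕ, 1 ≤ n ∧ (fc c)^[n] x = x

namespace Graph42

/-- Integer version of the map for `c = -(a²+a+1)`. -/
def g (a : ℤ) : ℤ → ℤ := fun x => x ^ 2 - (a ^ 2 + a + 1)

/-- The parameter family. -/
def ca (a : ℤ) : ℚ := -((a : ℚ) ^ 2 + a + 1)

def PreZ (a x : ℤ) : Prop := ∃ m n : ℕ, m < n ∧ (g a)^[m] x = (g a)^[n] x

lemma fc_cast (a m : ℤ) : fc (ca a) (m : ℚ) = ((g a m : ℤ) : ℚ) := by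
  simp only [fc, ca, g]
  push_cast
  ring

lemma fc_iter_cast (a : ℤ) (n : ℕ) (m : ℤ) :
    (fc (ca a))^[n] (m : ℚ) = (((g a)^[n] m : ℤ) : ℚ) := by
  induction n with
  | zero => simp
  | succ n ih =>
    rw [Function.iterate_succ_apply', Function.iterate_succ_apply', ih, fc_cast]

lemma den_add_int (q : ℚ) (k : ℤ) : (q + (k : ℚ)).den = q.den := by
  refine Nat.dvd_antisymm ?_ ?_
  · have h := Rat.add_den_dvd q (k : ℚ)
    simpa using h
  · have h := Rat.add_den_dvd (q + (k : ℚ)) ((-k : ℤ) : ℚ)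
    simpa using h

lemma den_fc (a : ℤ) (q : ℚ) : (fc (ca a) q).den = q.den ^ 2 := by
  have h : fc (ca a) q = q * q + ((-(a ^ 2 + a + 1) : ℤ) : ℚ) := by
    simp only [fc, ca]
    push_cast
    ring
  rw [h, den_add_int, Rat.mul_self_den, sq]

lemma den_fc_iter (a : ℤ) (n : ℕ) (q : ℚ) :
    ((fc (ca a))^[n] q).den = q.den ^ 2 ^ n := by
  induction n with
  | zero => simp
  | succ n ih =>
    rw [Function.iterate_succ_apply', den_fc, ih, ← pow_mul, ← pow_succ]

lemma preper_den_one {a : ℤ} {q : ℚ} (h : IsPreper (ca a) q) : q.den = 1 := by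
  obtain ⟨m, n, hmn, he⟩ := h
  by_contra hd
  have h2 : 2 ≤ q.den := by
    have := q.den_pos
    omega
  have hc := congrArg Rat.den he
  rw [den_fc_iter, den_fc_iter] at hc
  have h3 : 2 ^ m = 2 ^ n := Nat.pow_right_injective h2 hc
  have h4 : m = n := Nat.pow_right_injective le_rfl h3
  omega

lemma growth {a x : ℤ} (ha : 1 ≤ a) (hx : a + 2 ≤ |x|) :
    |x| + 1 ≤ |g a x| ∧ a + 2 ≤ |g a x| := by
  have h1 : |x| ^ 2 = x ^ 2 := sq_abs x
  have h2 : 0 < g a x := by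
    simp only [g]
    nlinarith [abs_nonneg x]
  have h3 : |g a x| = g a x := abs_of_pos h2
  constructor <;> · rw [h3]; simp only [g]; nlinarith [abs_nonneg x]

lemma iter_growth {a x : ℤ} (ha : 1 ≤ a) (hx : a + 2 ≤ |x|) (n : ℕ) :
    |x| + n ≤ |(g a)^[n] x| ∧ a + 2 ≤ |(g a)^[n] x| := by
  induction n with
  | zero => simpa using hx
  | succ n ih =>
    obtain ⟨h1, h2⟩ := ih
    obtain ⟨h3, h4⟩ := growth ha h2
    rw [Function.iterate_succ_apply']
    push_cast
    constructor <;> linarith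

lemma not_preper_of_big {a x : ℤ} (ha : 1 ≤ a) (hx : a + 2 ≤ |x|)
    (m n : ℕ) (hmn : m < n) : (g a)^[m] x ≠ (g a)^[n] x := by
  intro he
  obtain ⟨h1, h2⟩ := iter_growth ha hx m
  obtain ⟨h3, h4⟩ := iter_growth ha h2 (n - m)
  rw [← Function.iterate_add_apply] at h3
  have hnm : n - m + m = n := by omega
  rw [hnm, ← he] at h3
  have h5 : (1 : ℤ) ≤ ((n - m : ℕ) : ℤ) := by
    have : 1 ≤ n - m := by omega
    exact_mod_cast this
  linarith

lemma preZ_g {a x : ℤ} (h : PreZ a x) : PreZ a (g a x) := by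
  obtain ⟨m, n, hmn, he⟩ := h
  refine ⟨m, n, hmn, ?_⟩
  rw [← Function.iterate_succ_apply, ← Function.iterate_succ_apply,
    Function.iterate_succ_apply', Function.iterate_succ_apply', he]

lemma g_a (a : ℤ) : g a a = -a - 1 := by simp only [g]; ring

lemma g_b (a : ℤ) : g a (-a - 1) = a := by simp only [g]; ring

lemma g_na (a : ℤ) : g a (-a) = -a - 1 := by simp only [g]; ring

lemma g_a1 (a : ℤ) : g a (a + 1) = a := by simp only [g]; ring

lemma cycle_step {a y : ℤ} (hy : y = a ∨ y = -a - 1) :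
    g a y = a ∨ g a y = -a - 1 := by
  rcases hy with h | h
  · rw [h, g_a]; exact Or.inr rfl
  · rw [h, g_b]; exact Or.inl rfl

lemma orbit_na (a : ℤ) (n : ℕ) :
    (g a)^[n + 1] (-a) = a ∨ (g a)^[n + 1] (-a) = -a - 1 := by
  induction n with
  | zero => exact Or.inr (by simpa using g_na a)
  | succ n ih =>
    rw [Function.iterate_succ_apply']
    exact cycle_step ih

lemma orbit_a1 (a : ℤ) (n : ℕ) :
    (g a)^[n + 1] (a + 1) = a ∨ (g a)^[n + 1] (a + 1) = -a - 1 := by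
  induction n with
  | zero => exact Or.inl (by simpa using g_a1 a)
  | succ n ih =>
    rw [Function.iterate_succ_apply']
    exact cycle_step ih

lemma g2_a (a : ℤ) : (g a)^[2] a = a := by
  show g a (g a a) = a
  rw [g_a, g_b]

lemma g2_b (a : ℤ) : (g a)^[2] (-a - 1) = -a - 1 := by
  show g a (g a (-a - 1)) = -a - 1
  rw [g_b, g_a]

lemma preZ_a (a : ℤ) : PreZ a a := ⟨0, 2, by omega, (g2_a a).symm⟩

lemma preZ_b (a : ℤ) : PreZ a (-a - 1) := ⟨0, 2, by omega, (g2_b a).symm⟩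

lemma preZ_na (a : ℤ) : PreZ a (-a) := by
  refine ⟨1, 3, by omega, ?_⟩
  show g a (-a) = g a (g a (g a (-a)))
  rw [g_na, g_b, g_a]

lemma preZ_a1 (a : ℤ) : PreZ a (a + 1) := by
  refine ⟨1, 3, by omega, ?_⟩
  show g a (a + 1) = g a (g a (g a (a + 1)))
  rw [g_a1, g_a, g_b]

lemma preZ_subset {a x : ℤ} (ha : 1 ≤ a) (h : PreZ a x) :
    x = a ∨ x = -a - 1 ∨ x = -a ∨ x = a + 1 := by
  by_contra hc
  push_neg at hc
  obtain ⟨h1, h2, h3, h4⟩ := hc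
  have hxb : |x| ≤ a + 1 := by
    by_contra hb
    push_neg at hb
    obtain ⟨m, n, hmn, he⟩ := h
    exact not_preper_of_big ha (by omega) m n hmn he
  have hx1 : |x| ≤ a - 1 := by
    rcases abs_cases x with ⟨he, h0⟩ | ⟨he, h0⟩ <;> rw [he] at hxb ⊢ <;> omega
  have hgx : a + 2 ≤ |g a x| := by
    have hx2 : x ^ 2 ≤ (a - 1) ^ 2 := by
      nlinarith [sq_abs x, abs_nonneg x]
    have hneg : g a x < 0 := by simp only [g]; nlinarith
    rw [abs_of_neg hneg]
    simp only [g]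
    nlinarith
  obtain ⟨m, n, hmn, he⟩ := preZ_g h
  exact not_preper_of_big ha hgx m n hmn he

lemma preZ_iff_preper (a m : ℤ) : IsPreper (ca a) (m : ℚ) ↔ PreZ a m := by
  constructor <;> rintro ⟨mm, nn, h, he⟩ <;> refine ⟨mm, nn, h, ?_⟩
  · rw [fc_iter_cast, fc_iter_cast] at he
    exact_mod_cast he
  · rw [fc_iter_cast, fc_iter_cast]
    exact_mod_cast he

lemma preper_set_eq {a : ℤ} (ha : 1 ≤ a) :
    {x : ℚ | IsPreper (ca a) x} =
      {(a : ℚ), -(a : ℚ) - 1, -(a : ℚ), (a : ℚ) + 1} := by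
  have hb : -(a : ℚ) - 1 = ((-a - 1 : ℤ) : ℚ) := by push_cast; ring
  have hna : -(a : ℚ) = ((-a : ℤ) : ℚ) := by push_cast; ring
  have ha1 : (a : ℚ) + 1 = ((a + 1 : ℤ) : ℚ) := by push_cast; ring
  ext x
  simp only [Set.mem_setOf_eq, Set.mem_insert_iff, Set.mem_singleton_iff]
  constructor
  · intro h
    have hd := preper_den_one h
    have hx : x = (x.num : ℚ) := by
      conv_lhs => rw [← Rat.num_div_den x]
      rw [hd]
      simp
    rw [hx] at h ⊢
    have hZ := preZ_subset ha ((preZ_iff_preper a x.num).1 h)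
    rcases hZ with h | h | h | h <;> rw [h]
    · exact Or.inl rfl
    · exact Or.inr (Or.inl hb.symm)
    · exact Or.inr (Or.inr (Or.inl hna.symm))
    · exact Or.inr (Or.inr (Or.inr ha1.symm))
  · intro h
    rcases h with h | h | h | h <;> subst h
    · exact (preZ_iff_preper a a).2 (preZ_a a)
    · rw [hb]; exact (preZ_iff_preper a _).2 (preZ_b a)
    · rw [hna]; exact (preZ_iff_preper a _).2 (preZ_na a)
    · rw [ha1]; exact (preZ_iff_preper a _).2 (preZ_a1 a)

lemma per_set_eq {a : ℤ} (ha : 1 ≤ a) :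
    {x : ℚ | IsPer (ca a) x} = {(a : ℚ), -(a : ℚ) - 1} := by
  have hb : -(a : ℚ) - 1 = ((-a - 1 : ℤ) : ℚ) := by push_cast; ring
  ext x
  simp only [Set.mem_setOf_eq, Set.mem_insert_iff, Set.mem_singleton_iff]
  constructor
  · rintro ⟨n, hn, he⟩
    have hpre : IsPreper (ca a) x := ⟨0, n, by omega, by simpa using he.symm⟩
    have hd := preper_den_one hpre
    have hx : x = (x.num : ℚ) := by
      conv_lhs => rw [← Rat.num_div_den x]
      rw [hd]
      simp
    rw [hx] at he ⊢
    rw [fc_iter_cast] at he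
    have heZ : (g a)^[n] x.num = x.num := by exact_mod_cast he
    have hZ := preZ_subset ha ((preZ_iff_preper a x.num).1 (by rw [← hx]; exact hpre))
    rcases hZ with h | h | h | h
    · rw [h]; exact Or.inl rfl
    · rw [h]; exact Or.inr hb.symm
    · exfalso
      rw [h] at heZ
      have := orbit_na a (n - 1)
      rw [show n - 1 + 1 = n by omega, heZ] at this
      omega
    · exfalso
      rw [h] at heZ
      have := orbit_a1 a (n - 1)
      rw [show n - 1 + 1 = n by omega, heZ] at this
      omega
  · intro h
    rcases h with h | h <;> subst h
    · exact ⟨2, by omega, by rw [fc_iter_cast]; exact_mod_cast g2_a a⟩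
    · rw [hb]
      exact ⟨2, by omega, by rw [fc_iter_cast]; exact_mod_cast g2_b a⟩

lemma ncard_four {a : ℤ} (ha : 1 ≤ a) :
    ({(a : ℚ), -(a : ℚ) - 1, -(a : ℚ), (a : ℚ) + 1} : Set ℚ).ncard = 4 := by
  have haq : (1 : ℚ) ≤ (a : ℚ) := by exact_mod_cast ha
  rw [Set.ncard_insert_of_notMem (by
        intro h
        simp only [Set.mem_insert_iff, Set.mem_singleton_iff] at h
        rcases h with h | h | h <;> linarith),
      Set.ncard_insert_of_notMem (by
        intro h
        simp only [Set.mem_insert_iff, Set.mem_singleton_iff] at h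
        rcases h with h | h <;> linarith),
      Set.ncard_pair (by intro h; linarith)]

end Graph42

open Graph42 in
/-- Graph 4(2): infinitely many `c ∈ ℚ` with exactly 4 rational preperiodic points,
exactly 2 of them periodic, the two periodic points forming a 2-cycle. -/
theorem graph_4_2 :
    {c : ℚ | {x : ℚ | IsPreper c x}.ncard = 4 ∧
      ∃ a b : ℚ, a ≠ b ∧ {x : ℚ | IsPer c x} = {a, b} ∧
        fc c a = b ∧ fc c b = a}.Infinite := by
  apply Set.infinite_of_injective_forall_mem (f := fun n : ℕ => ca ((n : ℤ) + 1))
  case hi =>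
    intro i j h
    by_contra hne
    have hij : (i : ℚ) ≠ (j : ℚ) := by exact_mod_cast hne
    simp only [ca] at h
    push_cast at h
    rcases hij.lt_or_gt with hl | hl <;>
      nlinarith [Nat.cast_nonneg (α := ℚ) i, Nat.cast_nonneg (α := ℚ) j]
  case hf =>
      intro n
      set a : ℤ := (n : ℤ) + 1 with hadef
      have ha : 1 ≤ a := by omega
      have haq : (1 : ℚ) ≤ (a : ℚ) := by exact_mod_cast ha
      have hb : -(a : ℚ) - 1 = ((-a - 1 : ℤ) : ℚ) := by push_cast; ring
      refine ⟨?_, (a : ℚ), -(a : ℚ) - 1, by intro h; linarith, per_set_eq ha, ?_, ?_⟩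
      · rw [preper_set_eq ha]
        exact ncard_four ha
      · rw [fc_cast, g_a]
        push_cast
        ring
      · rw [hb, fc_cast, g_b]
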